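/- Let D be an irreducible projective curve over a field k with function field k(D), and let p ∈ D be a smooth k-rational point. Let 𝔸_D be the adele ring of D, Ô_q the completed local ring at q, K_p = Frac(Ô_p) ≅ k((t)), and A_p the ring of regular functions on the affine curve D ∖ {p}. Then there is an exact sequence of abelian groups: 0 → ∏_{q ≠ p} Ô_q → 𝔸_D / k(D) → K_p / A_p → 0. -/

import Mathlib

namespace DedekindDomain

open IsDedekindDomain

variable (R K : Type*) [CommRing R] [IsDedekindDomain R] [Field K] [Algebra R K]
  [IsFractionRing R K]

/-- The finite integral adeles `∏_v R_v` (removed from Mathlib; restored with its old meaning). -/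
def FiniteIntegralAdeles : Type _ :=
  ∀ v : HeightOneSpectrum R, v.adicCompletionIntegers K

noncomputable instance : CommRing (FiniteIntegralAdeles R K) :=
  inferInstanceAs (CommRing (∀ v : HeightOneSpectrum R, v.adicCompletionIntegers K))

/-- The inclusion of the finite integral adeles into the finite adele ring. -/
noncomputable def FiniteIntegralAdeles.toFiniteAdeleRing : FiniteIntegralAdeles R K →+* FiniteAdeleRing R K where
  toFun x := ⟨fun v => (x v : v.adicCompletion K), Filter.Eventually.of_forall (fun v => (x v).2)⟩
  map_one' := rfl
  map_mul' _ _ := rfl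
  map_zero' := rfl
  map_add' _ _ := rfl

noncomputable instance : Algebra (FiniteIntegralAdeles R K) (FiniteAdeleRing R K) :=
  (FiniteIntegralAdeles.toFiniteAdeleRing R K).toAlgebra

end DedekindDomain

open IsDedekindDomain DedekindDomain

/-!
STATEMENT 15: Let `D` be an irreducible projective curve over a field `k` with a smooth
`k`-rational point `p`.  We model the affine curve `D ∖ {p}` by a Dedekind domain `R`
(= `A_p`, the ring of regular functions on `D ∖ p`) with fraction field `F = k(D)`, and
the completed local field at `p` by `K_p ≅ k((t)) = LaurentSeries k`, into which `F`
embeds densely via `ι`.  The full adele group of `D` is `𝔸_D = 𝔸_{D∖p}^fin × K_p`.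
Then there is an exact sequence of abelian groups
  `0 → ∏_{q ≠ p} Ô_q → 𝔸_D / k(D) → K_p / A_p → 0` :
(1) the integral adeles `∏_{q ≠ p} Ô_q` inject into `𝔸_D/k(D)`;
(2) the map from `K_p` (via `x ↦ (0,x)`) to the quotient of `𝔸_D` by the subgroup
    generated by the principal adeles and the integral adeles is surjective;
(3) its kernel is exactly the image of `A_p = R`.
-/

noncomputable section

section AuxiliaryLemmas

open IsDedekindDomain.HeightOneSpectrum Multiplicative

variable {R F : Type*} [CommRing R] [IsDedekindDomain R] [Field F]
  [Algebra R F] [IsFractionRing R F]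

/-- L1: divisibility from all local valuations. -/
theorem dvd_of_intValuation_le {s a : R} (hs : s ≠ 0)
    (h : ∀ v : HeightOneSpectrum R, v.intValuation a ≤ v.intValuation s) : s ∣ a := by
  rcases eq_or_ne a 0 with rfl | ha
  · exact dvd_zero s
  have hI : Ideal.span {s} ≠ (0 : Ideal R) := by
    simpa [Ideal.span_singleton_eq_bot] using hs
  rw [← Ideal.span_singleton_le_span_singleton, ← Ideal.dvd_iff_le,
    ← Ideal.finprod_heightOneSpectrum_factorization hI]
  have hfin := Ideal.finite_mulSupport (R := R) hI
  rw [finprod_eq_prod_of_mulSupport_subset _ (s := hfin.toFinset) (fun x hx => (Set.Finite.mem_toFinset hfin).mpr hx)]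
  refine Finset.prod_dvd_of_coprime ?_ ?_
  · intro v _ w _ hvw
    apply IsCoprime.pow
    rw [Ideal.isCoprime_iff_sup_eq]
    exact Ideal.IsMaximal.coprime_of_ne (v.isPrime.isMaximal v.ne_bot)
      (w.isPrime.isMaximal w.ne_bot) (fun hc => hvw (HeightOneSpectrum.ext hc))
  · intro v _
    rw [HeightOneSpectrum.maxPowDividing, ← intValuation_le_pow_iff_dvd]
    calc v.intValuation a ≤ v.intValuation s := h v
      _ = _ := by rw [intValuation_if_neg _ hs]

/-- helper: valuation ≤ 1 from a multiplicative relation. -/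
theorem val_le_one_of_mul_eq (w : HeightOneSpectrum R) {f : F} {s y : R} (hs : s ≠ 0)
    (hf : f * algebraMap R F s = algebraMap R F y)
    (h : w.intValuation y ≤ w.intValuation s) : w.valuation F f ≤ 1 := by
  have hv : w.valuation F f * w.valuation F (algebraMap R F s) =
      w.valuation F (algebraMap R F y) := by rw [← Valuation.map_mul, hf]
  rw [valuation_of_algebraMap, valuation_of_algebraMap] at hv
  have hs0 : w.intValuation s ≠ 0 := intValuation_ne_zero w s hs
  refine (mul_le_mul_iff_left₀ (a := w.intValuation s) (zero_lt_iff.mpr hs0)).mp ?_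
  rw [hv, one_mul]
  exact h

/-- L2: an element of `F` with all valuations at most one lies in `R`. -/
theorem exists_algebraMap_eq_of_valuation_le_one {x : F}
    (h : ∀ v : HeightOneSpectrum R, v.valuation F x ≤ 1) :
    ∃ r : R, algebraMap R F r = x := by
  obtain ⟨⟨a, s⟩, hxs⟩ := IsLocalization.surj (nonZeroDivisors R) x
  have hs : (s : R) ≠ 0 := nonZeroDivisors.ne_zero s.2
  have hdvd : (s : R) ∣ a := by
    apply dvd_of_intValuation_le hs
    intro v
    have hv : v.valuation F x * v.valuation F (algebraMap R F (s : R)) =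
        v.valuation F (algebraMap R F a) := by rw [← Valuation.map_mul, hxs]
    rw [valuation_of_algebraMap, valuation_of_algebraMap] at hv
    simp only [← intValuation_apply, ← hv]
    exact mul_le_of_le_one_left' (h v)
  obtain ⟨t, rfl⟩ := hdvd
  refine ⟨t, ?_⟩
  have hs' : algebraMap R F (s : R) ≠ 0 := by
    simpa using (IsFractionRing.injective R F).ne_iff.mpr hs
  apply mul_right_cancel₀ hs'
  rw [map_mul, mul_comm (algebraMap R F (s:R))] at hxs
  rw [← hxs, mul_comm]

/-- L3: partial fractions: subtract something integral away from `v`. -/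
theorem exists_partial_fraction (x : F) (v : HeightOneSpectrum R) :
    ∃ f : F, v.valuation F (x - f) ≤ 1 ∧ ∀ w : HeightOneSpectrum R, w ≠ v → w.valuation F f ≤ 1 := by
  obtain ⟨⟨a, s⟩, hxs⟩ := IsLocalization.surj (nonZeroDivisors R) x
  simp only at hxs
  have hs : (s : R) ≠ 0 := nonZeroDivisors.ne_zero s.2
  have hI : Ideal.span {(s : R)} ≠ (0 : Ideal R) := by
    simpa [Ideal.span_singleton_eq_bot] using hs
  classical
  set n : HeightOneSpectrum R → ℕ := fun w =>
    (Associates.mk w.asIdeal).count (Associates.mk (Ideal.span {(s : R)})).factors with hn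
  have hsval : ∀ w : HeightOneSpectrum R,
      w.intValuation (s : R) = WithZero.exp (-(n w : ℤ)) := fun w => by
    rw [intValuation_apply, intValuationDef_if_neg _ hs]
  have hTfin := Ideal.finite_factors hI
  set t : Finset (HeightOneSpectrum R) := insert v hTfin.toFinset with ht
  obtain ⟨y, hy⟩ := IsDedekindDomain.exists_forall_sub_mem_ideal
    (s := t) (fun w => w.asIdeal) n
    (fun w _ => Ideal.prime_of_isPrime w.ne_bot w.isPrime)
    (fun w _ w' _ hww' hc => hww' (HeightOneSpectrum.ext hc))
    (fun i => if (i : HeightOneSpectrum R) = v then a else 0)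
  have hsF : algebraMap R F (s : R) ≠ 0 := fun hc =>
    hs (IsFractionRing.injective R F (by simpa using hc))
  refine ⟨algebraMap R F y / algebraMap R F (s : R), ?_, ?_⟩
  · -- valuation at v of x - y/s
    have hrel : (x - algebraMap R F y / algebraMap R F (s : R)) * algebraMap R F (s : R) =
        algebraMap R F (a - y) := by
      rw [sub_mul, div_mul_cancel₀ _ hsF, hxs, ← map_sub]
    refine val_le_one_of_mul_eq v hs hrel ?_
    rw [hsval v]
    rw [intValuation_le_pow_iff_dvd, Ideal.dvd_span_singleton]
    have := hy v (Finset.mem_insert_self v _)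
    simp only [if_pos rfl] at this
    simpa using neg_mem this
  · intro w hwv
    have hrel : (algebraMap R F y / algebraMap R F (s : R)) * algebraMap R F (s : R) =
        algebraMap R F y := div_mul_cancel₀ _ hsF
    refine val_le_one_of_mul_eq w hs hrel ?_
    by_cases hwT : w ∈ hTfin.toFinset
    · have := hy w (Finset.mem_insert_of_mem hwT)
      simp only [if_neg hwv, sub_zero] at this
      rw [hsval w, intValuation_le_pow_iff_dvd, Ideal.dvd_span_singleton]
      exact this
    · have hone : w.intValuation (s : R) = 1 := by
        have hle := intValuation_le_one w (s : R)
        rcases lt_or_eq_of_le hle with hlt | heq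
        · exact absurd ((intValuation_lt_one_iff_dvd w (s : R)).mp hlt)
            (by simpa [Set.Finite.mem_toFinset] using hwT)
        · exact heq
      rw [hone]
      exact intValuation_le_one w y

/-- L4: every element of the completion is within the integers of an element of `F`. -/
theorem exists_close_in_field (v : HeightOneSpectrum R) (y : v.adicCompletion F) :
    ∃ x : F, y - algebraMap F (v.adicCompletion F) x ∈ v.adicCompletionIntegers F := by
  have hd : DenseRange (algebraMap F (v.adicCompletion F)) := denseRange_algebraMap F v
  have hU : IsOpen ((fun z => y - z) ⁻¹'
      (v.adicCompletionIntegers F : Set (v.adicCompletion F))) :=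
    (Valued.isOpen_valuationSubring _).preimage (continuous_const.sub continuous_id)
  obtain ⟨x, hx⟩ := hd.exists_mem_open hU ⟨y, by simpa using (v.adicCompletionIntegers F).zero_mem⟩
  exact ⟨x, hx⟩

open scoped algebraMap in
/-- L5: strong approximation: every finite adele is a principal adele plus an integral adele. -/
theorem strong_approximation (a : FiniteAdeleRing R F) :
    ∃ (f : F) (c : FiniteIntegralAdeles R F),
      a = algebraMap F (FiniteAdeleRing R F) f +
        algebraMap (FiniteIntegralAdeles R F) (FiniteAdeleRing R F) c := by
  classical
  have ha : {v : HeightOneSpectrum R | a v ∉ v.adicCompletionIntegers F}.Finite := a.2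
  set S := ha.toFinset with hS
  have h1 : ∀ v : HeightOneSpectrum R, ∃ g : F,
      (a v - algebraMap F (v.adicCompletion F) g ∈ v.adicCompletionIntegers F) ∧
      ∀ w : HeightOneSpectrum R, w ≠ v → w.valuation F g ≤ 1 := by
    intro v
    obtain ⟨x, hx⟩ := exists_close_in_field v (a v)
    obtain ⟨g, hg1, hg2⟩ := exists_partial_fraction (R := R) x v
    refine ⟨g, ?_, hg2⟩
    have heq : a v - algebraMap F (v.adicCompletion F) g =
        (a v - algebraMap F (v.adicCompletion F) x) +
          algebraMap F (v.adicCompletion F) (x - g) := by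
      rw [RingHom.map_sub]; ring
    rw [heq]
    refine add_mem hx ?_
    have hh : Valued.v ((algebraMap F (v.adicCompletion F)) (x - g)) = v.valuation F (x - g) :=
      valuedAdicCompletion_eq_valuation' v (x - g)
    rw [mem_adicCompletionIntegers, hh]
    exact hg1
  choose g hg1 hg2 using h1
  set f : F := ∑ v ∈ S, g v with hf
  have key : ∀ w : HeightOneSpectrum R,
      a w - algebraMap F (w.adicCompletion F) f ∈ w.adicCompletionIntegers F := by
    intro w
    have hval : ∀ v : HeightOneSpectrum R, v ≠ w →
        algebraMap F (w.adicCompletion F) (g v) ∈ w.adicCompletionIntegers F := by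
      intro v hv
      have hh : Valued.v ((algebraMap F (w.adicCompletion F)) (g v)) = w.valuation F (g v) :=
        valuedAdicCompletion_eq_valuation' w (g v)
      rw [mem_adicCompletionIntegers, hh]
      exact hg2 v w (fun hc => hv hc.symm)
    have hmap : algebraMap F (w.adicCompletion F) f =
        ∑ v ∈ S, algebraMap F (w.adicCompletion F) (g v) := by
      rw [hf]
      exact map_sum (algebraMap F (w.adicCompletion F)).toAddMonoidHom _ _
    by_cases hw : w ∈ S
    · rw [hmap, ← Finset.add_sum_erase _ _ hw,
        show a w - (algebraMap F (w.adicCompletion F) (g w) +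
            ∑ v ∈ S.erase w, algebraMap F (w.adicCompletion F) (g v)) =
          (a w - algebraMap F (w.adicCompletion F) (g w)) -
            ∑ v ∈ S.erase w, algebraMap F (w.adicCompletion F) (g v) by ring]
      exact sub_mem (hg1 w) (sum_mem fun v hv => hval v (Finset.mem_erase.mp hv).1)
    · have haw : a w ∈ w.adicCompletionIntegers F := by
        by_contra hc; exact hw (ha.mem_toFinset.mpr hc)
      rw [hmap]
      exact sub_mem haw (sum_mem fun v hv => hval v (fun hc => hw (hc ▸ hv)))
  obtain ⟨c, hc⟩ : ∃ c : FiniteIntegralAdeles R F,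
      a - algebraMap F (FiniteAdeleRing R F) f =
        algebraMap (FiniteIntegralAdeles R F) (FiniteAdeleRing R F) c :=
    ⟨fun v => ⟨(a - algebraMap F (FiniteAdeleRing R F) f) v, key v⟩, rfl⟩
  have hc' : a - algebraMap F (FiniteAdeleRing R F) f =
      algebraMap (FiniteIntegralAdeles R F) (FiniteAdeleRing R F) c := hc
  exact ⟨f, c, by rw [← hc']; ring⟩

noncomputable instance : Algebra R (FiniteIntegralAdeles R F) :=
  inferInstanceAs (Algebra R (∀ v : HeightOneSpectrum R, v.adicCompletionIntegers F))

/-- Compatibility of the two ways of mapping `R` into the finite adeles. -/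
theorem algebraMap_integral_comm (r : R) :
    algebraMap (FiniteIntegralAdeles R F) (FiniteAdeleRing R F)
        (algebraMap R (FiniteIntegralAdeles R F) r) =
      algebraMap F (FiniteAdeleRing R F) (algebraMap R F r) := by
  apply FiniteAdeleRing.ext
  intro v
  show ((algebraMap R (FiniteIntegralAdeles R F) r) v : v.adicCompletion F) =
    algebraMap F (v.adicCompletion F) (algebraMap R F r)
  rw [← IsScalarTower.algebraMap_apply R F (v.adicCompletion F)]
  rfl

end AuxiliaryLemmas

variable (k R F : Type*) [Field k] [CommRing R] [IsDedekindDomain R] [Field F]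
  [Algebra R F] [IsFractionRing R F]

/-- The full adele group of the curve: finite adeles away from `p` times `K_p = k((t))`. -/
abbrev CurveAdeles := FiniteAdeleRing R F × LaurentSeries k

variable (ι : F →+* LaurentSeries k)

/-- The diagonally embedded rational functions `k(D) = F` in `𝔸_D`. -/
def principalCurveSubgroup : AddSubgroup (CurveAdeles k R F) :=
  (((algebraMap F (FiniteAdeleRing R F)).toAddMonoidHom.prod ι.toAddMonoidHom)).range

/-- The map `∏_{q ≠ p} Ô_q → 𝔸_D`, `x ↦ (x, 0)`. -/
def integralToAdeles : FiniteIntegralAdeles R F →+ CurveAdeles k R F :=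
  (AddMonoidHom.inl (FiniteAdeleRing R F) (LaurentSeries k)).comp
    (algebraMap (FiniteIntegralAdeles R F) (FiniteAdeleRing R F)).toAddMonoidHom

/-- The map `∏_{q ≠ p} Ô_q → 𝔸_D/k(D)`. -/
def integralToQuotient : FiniteIntegralAdeles R F →+
    (CurveAdeles k R F ⧸ principalCurveSubgroup k R F ι) :=
  (QuotientAddGroup.mk' _).comp (integralToAdeles k R F)

/-- The map `K_p → 𝔸_D/(k(D) + ∏_{q ≠ p} Ô_q)` induced by `x ↦ (0, x)`. -/
def KpToQuotient : LaurentSeries k →+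
    (CurveAdeles k R F ⧸ (principalCurveSubgroup k R F ι ⊔ (integralToAdeles k R F).range)) :=
  (QuotientAddGroup.mk' _).comp (AddMonoidHom.inr (FiniteAdeleRing R F) (LaurentSeries k))

/-- Exactness of `0 → ∏_{q ≠ p} Ô_q → 𝔸_D/k(D) → K_p/A_p → 0`. -/
theorem curve_adelic_exact_sequence (hdense : DenseRange ⇑ι) :
    Function.Injective (integralToQuotient k R F ι) ∧
    Function.Surjective (KpToQuotient k R F ι) ∧
    (KpToQuotient k R F ι).ker = (ι.comp (algebraMap R F)).toAddMonoidHom.range := by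
  refine ⟨?_, ?_, ?_⟩
  · -- injectivity
    rw [injective_iff_map_eq_zero]
    intro x hx
    have hx' : integralToAdeles k R F x ∈ principalCurveSubgroup k R F ι :=
      (QuotientAddGroup.eq_zero_iff _).mp hx
    obtain ⟨f, hf⟩ := hx'
    have h2 : ι f = 0 := congrArg Prod.snd hf
    have hf0 : f = 0 := ι.injective (by rw [h2, map_zero])
    have h1 : algebraMap F (FiniteAdeleRing R F) f =
        algebraMap (FiniteIntegralAdeles R F) (FiniteAdeleRing R F) x := congrArg Prod.fst hf
    rw [hf0, map_zero] at h1
    funext v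
    have h3 : ∀ w : IsDedekindDomain.HeightOneSpectrum R,
        ((x w : w.adicCompletion F)) = 0 :=
      fun w => (congrFun (congrArg Subtype.val h1.symm) w :)
    exact Subtype.ext (h3 v)
  · -- surjectivity
    intro q
    obtain ⟨⟨a, y⟩, rfl⟩ := QuotientAddGroup.mk'_surjective _ q
    obtain ⟨f, c, hfc⟩ := strong_approximation a
    refine ⟨y - ι f, ?_⟩
    have hmem : (-(((0 : FiniteAdeleRing R F), y - ι f) : CurveAdeles k R F) + (a, y)) ∈
        principalCurveSubgroup k R F ι ⊔ (integralToAdeles k R F).range := by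
      have hsum : (-(((0 : FiniteAdeleRing R F), y - ι f) : CurveAdeles k R F) + (a, y)) =
          ((a, ι f) : CurveAdeles k R F) := by
        ext
        · simp
        · simp
      rw [hsum]
      refine AddSubgroup.mem_sup.mpr ⟨(algebraMap F (FiniteAdeleRing R F) f, ι f), ⟨f, rfl⟩,
        (algebraMap (FiniteIntegralAdeles R F) (FiniteAdeleRing R F) c, 0), ⟨c, rfl⟩, ?_⟩
      exact Prod.ext (by simp [hfc]) (by simp)
    exact (QuotientAddGroup.eq
      (s := principalCurveSubgroup k R F ι ⊔ (integralToAdeles k R F).range)).mpr hmem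
  · -- kernel
    ext x
    simp only [AddMonoidHom.mem_ker, AddMonoidHom.mem_range]
    constructor
    · intro hx
      have hx' : (((0 : FiniteAdeleRing R F), x) : CurveAdeles k R F) ∈
          principalCurveSubgroup k R F ι ⊔ (integralToAdeles k R F).range :=
        (QuotientAddGroup.eq_zero_iff _).mp hx
      rw [AddSubgroup.mem_sup] at hx'
      obtain ⟨p, hp, z, hz, hpz⟩ := hx'
      obtain ⟨f, rfl⟩ := hp
      obtain ⟨c, rfl⟩ := hz
      have h1 : algebraMap F (FiniteAdeleRing R F) f +
          algebraMap (FiniteIntegralAdeles R F) (FiniteAdeleRing R F) c = 0 :=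
        congrArg Prod.fst hpz
      have h2 : ι f + 0 = x := congrArg Prod.snd hpz
      have hval : ∀ v : IsDedekindDomain.HeightOneSpectrum R, v.valuation F f ≤ 1 := by
        intro v
        have hneg : algebraMap F (FiniteAdeleRing R F) f =
            -(algebraMap (FiniteIntegralAdeles R F) (FiniteAdeleRing R F) c) :=
          eq_neg_of_add_eq_zero_left h1
        have hcomp : algebraMap F (v.adicCompletion F) f = -((c v : v.adicCompletion F)) :=
          (congrFun (congrArg Subtype.val hneg) v :)
        have hv1 : Valued.v ((algebraMap F (v.adicCompletion F)) f) = v.valuation F f :=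
          IsDedekindDomain.HeightOneSpectrum.valuedAdicCompletion_eq_valuation' v f
        rw [← hv1, hcomp, Valuation.map_neg]
        exact (c v).2
      obtain ⟨r, rfl⟩ := exists_algebraMap_eq_of_valuation_le_one hval
      exact ⟨r, by rw [← h2, add_zero]; rfl⟩
    · rintro ⟨r, rfl⟩
      refine (QuotientAddGroup.eq_zero_iff
        (((0 : FiniteAdeleRing R F), ι (algebraMap R F r)) : CurveAdeles k R F)).mpr ?_
      refine AddSubgroup.mem_sup.mpr
        ⟨(algebraMap F (FiniteAdeleRing R F) (algebraMap R F r), ι (algebraMap R F r)),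
          ⟨algebraMap R F r, rfl⟩,
          (-(algebraMap F (FiniteAdeleRing R F) (algebraMap R F r)), 0),
          ⟨-(algebraMap R (FiniteIntegralAdeles R F) r), ?_⟩, by ext <;> simp⟩
      show ((algebraMap (FiniteIntegralAdeles R F) (FiniteAdeleRing R F))
          (-(algebraMap R (FiniteIntegralAdeles R F) r)), (0 : LaurentSeries k)) = _
      rw [map_neg, algebraMap_integral_comm]

end
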